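/- arXiv:1511.02664 — 3 statements merged into one kernel-verified Lean document; each statement's English description precedes it below -/
import Mathlib

section
/- Let $\Gamma$ be a non-elementary discrete isometry group of a proper geodesic $\delta$-hyperbolic space, and let $\mu$ be an $s$-dimensional $\Gamma$-quasi-invariant quasiconformal measure on $\partial X$ for which the shadow lemma holds (i.e., $L^{-1}a^{-sd(o,\gamma^{-1}o)}\le\mu(S_o(\gamma^{-1}o,r))\le L a^{2rs}a^{-sd(o,\gamma^{-1}o)}$ for $r\ge r_0$). If the Poincaré series $P^s_\Gamma(o,o)=\sum_{\gamma\in\Gamma}a^{-sd(o,\gamma o)}$ converges, then $\mu(\Lambda_c(\Gamma))=0$, where $\Lambda_c(\Gamma)$ is the conical limit set. -/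
open Metric MeasureTheory
open scoped ENNReal

/-- The shadow `S_ω(x,r)` with light source `ω` in the bordification. -/
def shadow {X B : Type*} [MetricSpace X] (geo : X ⊕ B → X ⊕ B → Set (Set X))
    (ω : X ⊕ B) (x : X) (r : ℝ) : Set B :=
  {ξ | ∀ g ∈ geo ω (Sum.inr ξ), ∃ p ∈ g, dist p x ≤ r}

lemma shadow_mono {X B : Type*} [MetricSpace X] (geo : X ⊕ B → X ⊕ B → Set (Set X))
    (ω : X ⊕ B) (x : X) {ρ r : ℝ} (h : ρ ≤ r) :
    shadow geo ω x ρ ⊆ shadow geo ω x r := by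
  intro ξ hξ g hg
  obtain ⟨p, hp, hd⟩ := hξ g hg
  exact ⟨p, hp, hd.trans h⟩

/-- Proposition 2.10 of the paper (Borel–Cantelli): let `Γ` be a non-elementary
discrete isometry group and `μ` an `s`-dimensional `Γ`-quasi-invariant
quasiconformal measure on the boundary `B` for which the shadow lemma holds.
If the Poincaré series of `Γ` at exponent `s` converges, then the conical
limit set `Λc` (every point of which lies in infinitely many shadows
`S_o(γ⁻¹ o, ρ)` for some `ρ > 0`) is `μ`-null. -/
theorem conical_limit_null_of_convergence {X B : Type*} [MetricSpace X]
    [MeasurableSpace B] (o : X)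
    (geo : X ⊕ B → X ⊕ B → Set (Set X))
    (Γ : Subgroup (X ≃ᵢ X))
    -- discreteness of `Γ`:
    (hdisc : ∀ R : ℝ, {γ : Γ | dist o ((γ : X ≃ᵢ X) o) ≤ R}.Finite)
    (μ : Measure B) [IsFiniteMeasure μ]
    (s a : ℝ) (hs : 0 ≤ s) (ha : 1 < a)
    (L r₀ : ℝ) (hL : 1 ≤ L) (hr₀ : 0 < r₀)
    -- the shadow lemma for `μ`:
    (hshadow : ∀ r ≥ r₀, ∀ γ : Γ,
      ENNReal.ofReal (L⁻¹ * a ^ (-(s * dist o ((γ : X ≃ᵢ X).symm o)))) ≤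
        μ (shadow geo (Sum.inl o) ((γ : X ≃ᵢ X).symm o) r) ∧
      μ (shadow geo (Sum.inl o) ((γ : X ≃ᵢ X).symm o) r) ≤
        ENNReal.ofReal (L * a ^ (2 * r * s) * a ^ (-(s * dist o ((γ : X ≃ᵢ X).symm o)))))
    -- convergence of the Poincaré series at exponent `s`:
    (hconv : ∑' γ : Γ, ENNReal.ofReal (a ^ (-(s * dist o ((γ : X ≃ᵢ X) o)))) < ⊤)
    (Λc : Set B)
    -- every conical limit point lies in infinitely many shadows of some fixed radius:
    (hΛ : ∀ ξ ∈ Λc, ∃ ρ > (0:ℝ),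
      {γ : Γ | ξ ∈ shadow geo (Sum.inl o) ((γ : X ≃ᵢ X).symm o) ρ}.Infinite) :
    μ Λc = 0 := by
  -- Γ is countable
  haveI : Countable Γ := by
    rw [← Set.countable_univ_iff]
    refine Set.Countable.mono (fun γ _ => ?_)
      (Set.countable_iUnion (fun n : ℕ => (hdisc n).countable))
    refine Set.mem_iUnion.2 ⟨⌈dist o ((γ : X ≃ᵢ X) o)⌉₊, ?_⟩
    simp only [Set.mem_setOf_eq]
    exact Nat.le_ceil _
  -- distance symmetry
  have hdistsymm : ∀ γ : Γ, dist o ((γ : X ≃ᵢ X).symm o) = dist o ((γ : X ≃ᵢ X) o) := by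
    intro γ
    calc dist o ((γ : X ≃ᵢ X).symm o)
        = dist ((γ : X ≃ᵢ X) o) ((γ : X ≃ᵢ X) ((γ : X ≃ᵢ X).symm o)) := by
          rw [(γ : X ≃ᵢ X).isometry.dist_eq]
      _ = dist o ((γ : X ≃ᵢ X) o) := by rw [(γ : X ≃ᵢ X).apply_symm_apply, dist_comm]
  -- for each radius r ≥ r₀, the set of points in infinitely many shadows is null
  have key : ∀ r ≥ r₀,
      μ {ξ | {γ : Γ | ξ ∈ shadow geo (Sum.inl o) ((γ : X ≃ᵢ X).symm o) r}.Infinite} = 0 := by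
    intro r hr
    set t : Γ → Set B := fun γ => shadow geo (Sum.inl o) ((γ : X ≃ᵢ X).symm o) r with ht
    have hsum : ∑' γ : Γ, μ (t γ) ≠ ⊤ := by
      refine ne_top_of_le_ne_top ?_ (ENNReal.tsum_le_tsum (fun γ => (hshadow r hr γ).2))
      have : ∀ γ : Γ, ENNReal.ofReal
            (L * a ^ (2 * r * s) * a ^ (-(s * dist o ((γ : X ≃ᵢ X).symm o))))
          = ENNReal.ofReal (L * a ^ (2 * r * s)) *
            ENNReal.ofReal (a ^ (-(s * dist o ((γ : X ≃ᵢ X) o)))) := by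
        intro γ
        rw [hdistsymm γ, ENNReal.ofReal_mul]
        positivity
      rw [tsum_congr this, ENNReal.tsum_mul_left]
      exact ENNReal.mul_ne_top ENNReal.ofReal_ne_top hconv.ne
    have hnull := measure_limsup_cofinite_eq_zero (μ := μ) hsum
    refine measure_mono_null (fun ξ hξ => ?_) hnull
    rw [Filter.mem_limsup_iff_frequently_mem, Filter.frequently_cofinite_iff_infinite]
    exact hξ
  -- cover Λc by countably many such sets
  have hcover : Λc ⊆ ⋃ n : ℕ,
      {ξ | {γ : Γ | ξ ∈ shadow geo (Sum.inl o) ((γ : X ≃ᵢ X).symm o) (r₀ + n)}.Infinite} := by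
    intro ξ hξ
    obtain ⟨ρ, hρ, hinf⟩ := hΛ ξ hξ
    refine Set.mem_iUnion.2 ⟨⌈ρ⌉₊, hinf.mono (fun γ hγ => ?_)⟩
    exact shadow_mono geo _ _ (le_trans (Nat.le_ceil ρ) (by linarith [Nat.le_ceil ρ])) hγ
  refine measure_mono_null hcover ?_
  exact measure_iUnion_null (fun n => key (r₀ + n) (le_add_of_nonneg_right (Nat.cast_nonneg n)))
end

section
/- Let $G$ be a discrete isometry group of a proper geodesic $\delta$-hyperbolic space, $h\in G$ a hyperbolic element. For each coset $[g]\in\langle h\rangle\backslash G$ set $d(o,[g](o))=\inf_{n\in\mathbb Z} d(o,h^n g(o))$. Then for every $s>0$ there is a constant $A_h(s)>0$ (depending only on $s$, $h$, $\delta$, $a$) such that $\sum_{g\in G} a^{-s d(o,g(o))}\;\le\; A_h(s)\sum_{[g]\in\langle h\rangle\backslash G} a^{-s d(o,[g](o))}$. -/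
open scoped ENNReal

section AuxCore


private lemma core_nat {X : Type*} [MetricSpace X] (δ σ Δ : ℝ) (hδ : 0 ≤ δ) (hσ : 2 ≤ σ)
    (hΔ0 : 0 ≤ Δ) (hΔ : Δ ≤ σ / 4)
    (hhyp : ∀ x y z w : X,
      min ((dist x w + dist y w - dist x y) / 2)
          ((dist y w + dist z w - dist y z) / 2) - δ ≤
        (dist x w + dist z w - dist x z) / 2)
    (Q : ℤ → X) (y : X)
    (hlow : ∀ i j : ℤ, |(i : ℝ) - (j : ℝ)| * σ ≤ dist (Q i) (Q j))
    (hup : ∀ i j : ℤ, dist (Q i) (Q j) ≤ |(i : ℝ) - (j : ℝ)| * (σ + Δ))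
    (hmin : ∀ j : ℤ, dist (Q 0) y - 1 ≤ dist (Q j) y) (m : ℕ) :
    dist (Q 0) y + (m : ℝ) * σ / 4 - (6 * σ + 8 * δ + 6) ≤ dist (Q m) y := by
  have hσ0 : (0:ℝ) < σ := by linarith
  set d0 : ℝ := dist (Q 0) y with hd0
  set T : ℝ := (d0 + dist (Q (m:ℤ)) (Q 0) - dist (Q (m:ℤ)) y) / 2 with hT
  -- basic distance facts
  have hQm0 : (m : ℝ) * σ ≤ dist (Q (m:ℤ)) (Q 0) := by
    have := hlow (m:ℤ) 0
    rw [Int.cast_natCast, Int.cast_zero, sub_zero, Nat.abs_cast] at this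
    exact this
  have hQm0' : dist (Q (m:ℤ)) (Q 0) ≤ (m : ℝ) * (σ + Δ) := by
    have := hup (m:ℤ) 0
    rw [Int.cast_natCast, Int.cast_zero, sub_zero, Nat.abs_cast] at this
    exact this
  have hminm := hmin (m:ℤ)
  -- upper bound on T from approximate minimality
  have hT_ub : T ≤ ((m:ℝ) * (σ + Δ) + 1) / 2 := by
    rw [hT]; linarith
  have hmΔσ : (m:ℝ) * Δ ≤ (m:ℝ) * (σ/4) :=
    mul_le_mul_of_nonneg_left hΔ (by positivity)
  -- the key claim
  have claim : T ≤ 3/2 * ((m:ℝ) * Δ) + (3 * σ + 4 * δ + 3) := by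
    rcases le_or_gt (m:ℝ) 4 with hm4 | hm4
    · have : (m:ℝ) * (σ + Δ) ≤ 4 * (σ + Δ) :=
        mul_le_mul_of_nonneg_right hm4 (by linarith)
      have hmd : 0 ≤ (m:ℝ) * Δ := by positivity
      linarith
    rcases le_or_gt T σ with hTσ | hTσ
    · have hmd : 0 ≤ (m:ℝ) * Δ := by positivity
      linarith
    -- main case : m ≥ 5 and T > σ
    have hm5 : (5:ℝ) ≤ (m:ℝ) := by
      have : (4:ℤ) < (m:ℤ) := by exact_mod_cast hm4
      have : (5:ℤ) ≤ (m:ℤ) := this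
      exact_mod_cast this
    set x : ℝ := (T + (m:ℝ) * Δ / 2) / σ with hx
    have hx0 : 0 ≤ x := by
      apply div_nonneg _ hσ0.le
      have : 0 ≤ (m:ℝ) * Δ := by positivity
      linarith
    set j : ℕ := ⌈x⌉₊ with hj
    have hxj : x ≤ (j:ℝ) := Nat.le_ceil x
    have hjx : (j:ℝ) < x + 1 := Nat.ceil_lt_add_one hx0
    have hxσ : x * σ = T + (m:ℝ) * Δ / 2 := div_mul_cancel₀ _ hσ0.ne'
    have hj1 : T + (m:ℝ) * Δ / 2 ≤ (j:ℝ) * σ := by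
      have := mul_le_mul_of_nonneg_right hxj hσ0.le
      rwa [hxσ] at this
    have hj2 : (j:ℝ) * σ < T + (m:ℝ) * Δ / 2 + σ := by
      have := mul_lt_mul_of_pos_right hjx hσ0
      rw [add_mul, one_mul, hxσ] at this
      linarith
    have e1 : (m:ℝ) * (σ + Δ) = (m:ℝ) * σ + (m:ℝ) * Δ := by ring
    have e2 : (m:ℝ) * (σ/4) = ((m:ℝ) * σ)/4 := by ring
    have h5σ : 5 * σ ≤ (m:ℝ) * σ := mul_le_mul_of_nonneg_right hm5 hσ0.le
    have hjm : (j:ℝ) ≤ (m:ℝ) := by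
      have hjmσ : (j:ℝ) * σ ≤ (m:ℝ) * σ := by linarith
      exact le_of_mul_le_mul_right hjmσ hσ0
    have hjmZ : (j:ℤ) ≤ (m:ℤ) := by exact_mod_cast hjm
    -- Gromov product of Q j and Q m at Q 0 is at least jσ - mΔ/2
    have hQj0 : (j : ℝ) * σ ≤ dist (Q (j:ℤ)) (Q 0) := by
      have := hlow (j:ℤ) 0
      rw [Int.cast_natCast, Int.cast_zero, sub_zero, Nat.abs_cast] at this
      exact this
    have hQj0' : dist (Q (j:ℤ)) (Q 0) ≤ (j : ℝ) * (σ + Δ) := by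
      have := hup (j:ℤ) 0
      rw [Int.cast_natCast, Int.cast_zero, sub_zero, Nat.abs_cast] at this
      exact this
    have hQmj : dist (Q (m:ℤ)) (Q (j:ℤ)) ≤ ((m:ℝ) - (j:ℝ)) * (σ + Δ) := by
      have := hup (m:ℤ) (j:ℤ)
      rw [Int.cast_natCast, Int.cast_natCast, abs_of_nonneg (by linarith)] at this
      exact this
    have hG : (j:ℝ) * σ - (m:ℝ) * Δ / 2 ≤
        (dist (Q (m:ℤ)) (Q 0) + dist (Q (j:ℤ)) (Q 0) - dist (Q (m:ℤ)) (Q (j:ℤ))) / 2 := by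
      have hjΔ : 0 ≤ (j:ℝ) * Δ := by positivity
      have e3 : ((m:ℝ) - (j:ℝ)) * (σ + Δ) = (m:ℝ)*σ + (m:ℝ)*Δ - (j:ℝ)*σ - (j:ℝ)*Δ := by ring
      linarith
    -- apply the four point condition
    have hkey := hhyp y (Q (m:ℤ)) (Q (j:ℤ)) (Q 0)
    have c1 : dist y (Q (m:ℤ)) = dist (Q (m:ℤ)) y := dist_comm _ _
    have c2 : dist y (Q (j:ℤ)) = dist (Q (j:ℤ)) y := dist_comm _ _
    have c3 : dist y (Q 0) = d0 := dist_comm _ _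
    have c4 : dist (Q (m:ℤ)) (Q 0) = dist (Q (m:ℤ)) (Q 0) := rfl
    rw [c1, c2, c3] at hkey
    -- first argument of min is T (after dist_comm), second is ≥ T
    have hminT : T - δ ≤ (d0 + dist (Q (j:ℤ)) (Q 0) - dist (Q (j:ℤ)) y) / 2 := by
      have hA : T ≤ (d0 + dist (Q (m:ℤ)) (Q 0) - dist (Q (m:ℤ)) y) / 2 := le_of_eq hT
      have hB : T ≤ (dist (Q (m:ℤ)) (Q 0) + dist (Q (j:ℤ)) (Q 0) - dist (Q (m:ℤ)) (Q (j:ℤ))) / 2 := by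
        linarith
      calc T - δ ≤ min ((d0 + dist (Q (m:ℤ)) (Q 0) - dist (Q (m:ℤ)) y) / 2)
            ((dist (Q (m:ℤ)) (Q 0) + dist (Q (j:ℤ)) (Q 0) - dist (Q (m:ℤ)) (Q (j:ℤ))) / 2) - δ := by
            have := le_min hA hB; linarith
        _ ≤ (d0 + dist (Q (j:ℤ)) (Q 0) - dist (Q (j:ℤ)) y) / 2 := hkey
    have hminj := hmin (j:ℤ)
    -- so 2T - 2δ ≤ j(σ+Δ) + 1
    have hfin : 2 * T - 2 * δ ≤ (j:ℝ) * (σ + Δ) + 1 := by linarith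
    have hjΔσ : (j:ℝ) * Δ ≤ (j:ℝ) * (σ/4) := mul_le_mul_of_nonneg_left hΔ (by positivity)
    have e4 : (j:ℝ) * (σ + Δ) = (j:ℝ)*σ + (j:ℝ)*Δ := by ring
    have e5 : (j:ℝ) * (σ/4) = ((j:ℝ)*σ)/4 := by ring
    have hmd : 0 ≤ (m:ℝ) * Δ := by positivity
    linarith
  -- conclude from the claim
  have : dist (Q (m:ℤ)) y = d0 + dist (Q (m:ℤ)) (Q 0) - 2 * T := by rw [hT]; ring
  rw [this]
  linarith

private lemma core_int {X : Type*} [MetricSpace X] (δ σ Δ : ℝ) (hδ : 0 ≤ δ) (hσ : 2 ≤ σ)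
    (hΔ0 : 0 ≤ Δ) (hΔ : Δ ≤ σ / 4)
    (hhyp : ∀ x y z w : X,
      min ((dist x w + dist y w - dist x y) / 2)
          ((dist y w + dist z w - dist y z) / 2) - δ ≤
        (dist x w + dist z w - dist x z) / 2)
    (Q : ℤ → X) (y : X)
    (hlow : ∀ i j : ℤ, |(i : ℝ) - (j : ℝ)| * σ ≤ dist (Q i) (Q j))
    (hup : ∀ i j : ℤ, dist (Q i) (Q j) ≤ |(i : ℝ) - (j : ℝ)| * (σ + Δ))
    (hmin : ∀ j : ℤ, dist (Q 0) y - 1 ≤ dist (Q j) y) (m : ℤ) :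
    dist (Q 0) y + |(m : ℝ)| * σ / 4 - (6 * σ + 8 * δ + 6) ≤ dist (Q m) y := by
  have habs : |(m : ℝ)| = (m.natAbs : ℝ) := by rw [Nat.cast_natAbs, Int.cast_abs]
  rcases Int.natAbs_eq m with e | e
  · have hc := core_nat δ σ Δ hδ hσ hΔ0 hΔ hhyp Q y hlow hup hmin m.natAbs
    rw [habs, e]
    exact hc
  · set Q' : ℤ → X := fun i => Q (-i) with hQ'
    have hc := core_nat δ σ Δ hδ hσ hΔ0 hΔ hhyp Q' y
      (fun i j => by
        have := hlow (-i) (-j)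
        rw [show |((-i : ℤ) : ℝ) - ((-j : ℤ) : ℝ)| = |(i:ℝ) - (j:ℝ)| by push_cast; rw [← abs_neg]; ring_nf]
          at this
        exact this)
      (fun i j => by
        have := hup (-i) (-j)
        rw [show |((-i : ℤ) : ℝ) - ((-j : ℤ) : ℝ)| = |(i:ℝ) - (j:ℝ)| by push_cast; rw [← abs_neg]; ring_nf]
          at this
        exact this)
      (fun j => by have := hmin (-j); simpa [hQ'] using this) m.natAbs
    have hQ'0 : Q' 0 = Q 0 := by simp [hQ']
    have hQ'm : Q' (m.natAbs : ℤ) = Q m := by rw [hQ']; simp only; rw [← e]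
    rw [hQ'0, hQ'm] at hc
    rw [habs]
    exact hc

end AuxCore

private def finIntEquiv (k : ℕ) (hk : 0 < k) : Fin k × ℤ ≃ ℤ where
  toFun p := p.2 * (k : ℤ) + (p.1 : ℤ)
  invFun n := (⟨(n % (k : ℤ)).toNat, by
      have h0 : (0:ℤ) < (k:ℤ) := by exact_mod_cast hk
      have h1 := Int.emod_lt_of_pos n h0
      have h2 := Int.emod_nonneg n h0.ne'
      omega⟩, n / (k : ℤ))
  left_inv := by
    rintro ⟨r, j⟩
    have h0 : (0:ℤ) < (k:ℤ) := by exact_mod_cast hk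
    have hr0 : (0:ℤ) ≤ (r:ℤ) := Int.ofNat_nonneg _
    have hrk : ((r:ℕ):ℤ) < (k:ℤ) := by exact_mod_cast r.isLt
    have hmod : (j * (k:ℤ) + (r:ℤ)) % (k:ℤ) = (r:ℤ) := by
      rw [add_comm, Int.add_mul_emod_self_right, Int.emod_eq_of_lt hr0 hrk]
    have hdiv : (j * (k:ℤ) + (r:ℤ)) / (k:ℤ) = j := by
      rw [add_comm, Int.add_mul_ediv_right _ _ h0.ne', Int.ediv_eq_zero_of_lt hr0 hrk, zero_add]
    ext
    · simp [hmod]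
    · simp [hdiv]
  right_inv := fun n => by
    have h0 : (0:ℤ) < (k:ℤ) := by exact_mod_cast hk
    have h1 := Int.emod_nonneg n h0.ne'
    simp only
    rw [Int.toNat_of_nonneg h1, mul_comm]
    exact Int.mul_ediv_add_emod n k
set_option maxHeartbeats 1000000 in
/-- Lemma 8.4 of the paper: let `G` be a discrete isometry group of a proper
geodesic `δ`-hyperbolic space (`δ`-hyperbolicity via the four-point Gromov
product condition `hhyp`, geodesicity via midpoints `hmid`), and `h ∈ G` a
hyperbolic element with quasi-geodesic axis constants `(lam, c)`. For each
right coset `[g] ∈ ⟨h⟩\G` let `D [g] = inf_{n ∈ ℤ} d(o, hⁿ g o)`. Then for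
every `s > 0` there is `A > 0` with
`∑_{g ∈ G} a^{-s d(o, g o)} ≤ A ∑_{[g]} a^{-s D[g]}`. -/
theorem coset_poincare_series_bound {X : Type*} [MetricSpace X] [ProperSpace X]
    {G : Type*} [Group G] [MulAction G X]
    (hiso : ∀ g : G, Isometry (fun x : X => g • x))
    (o : X)
    (hmid : ∀ x y : X, ∃ m : X, dist x m = dist x y / 2 ∧ dist m y = dist x y / 2)
    (δ : ℝ) (hδ : 0 ≤ δ)
    (hhyp : ∀ x y z w : X,
      min ((dist x w + dist y w - dist x y) / 2)
          ((dist y w + dist z w - dist y z) / 2) - δ ≤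
        (dist x w + dist z w - dist x z) / 2)
    (hdisc : ∀ R : ℝ, {g : G | dist o (g • o) ≤ R}.Finite)
    (h : G) (ℓ lam c : ℝ) (hℓ : ℓ = dist o (h • o)) (hℓpos : 0 < ℓ)
    (hlam : 1 ≤ lam) (hc : 0 ≤ c)
    (hqg : ∀ n : ℤ, lam⁻¹ * ℓ * |(n : ℝ)| - c ≤ dist o ((h ^ n) • o))
    (a s : ℝ) (ha : 1 < a) (hs : 0 < s)
    (D : Quotient (QuotientGroup.rightRel (Subgroup.zpowers h)) → ℝ)
    (hD : ∀ g : G, D (Quotient.mk (QuotientGroup.rightRel (Subgroup.zpowers h)) g) =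
      ⨅ n : ℤ, dist o ((h ^ n * g) • o)) :
    ∃ A > (0:ℝ),
      ∑' g : G, ENNReal.ofReal (a ^ (-(s * dist o (g • o)))) ≤
        ENNReal.ofReal A *
          ∑' q : Quotient (QuotientGroup.rightRel (Subgroup.zpowers h)),
            ENNReal.ofReal (a ^ (-(s * D q))) := by
  classical
  have hdist : ∀ (g : G) (x y' : X), dist (g • x) (g • y') = dist x y' :=
    fun g x y' => (hiso g).dist_eq x y'
  set u : ℤ → ℝ := fun n => dist o ((h ^ n) • o) with hu
  have u_nonneg : ∀ n, 0 ≤ u n := fun _ => dist_nonneg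
  have u_zero : u 0 = 0 := by simp [hu]
  have u_neg : ∀ n : ℤ, u (-n) = u n := by
    intro n
    have e : (h ^ n) • ((h ^ (-n)) • o) = o := by
      rw [← mul_smul, ← zpow_add, add_neg_cancel, zpow_zero, one_smul]
    calc u (-n) = dist ((h ^ n) • o) ((h ^ n) • ((h ^ (-n)) • o)) := by
          rw [hdist]
      _ = dist ((h ^ n) • o) o := by rw [e]
      _ = u n := dist_comm _ _
  have u_subadd : ∀ m n : ℤ, u (m + n) ≤ u m + u n := by
    intro m n
    have h1 : dist ((h ^ m) • o) ((h ^ (m + n)) • o) = u n := by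
      calc dist ((h ^ m) • o) ((h ^ (m + n)) • o)
          = dist ((h ^ m) • o) ((h ^ m) • ((h ^ n) • o)) := by
            rw [← mul_smul, ← zpow_add]
        _ = dist o ((h ^ n) • o) := hdist _ _ _
    calc u (m + n) = dist o ((h ^ (m + n)) • o) := rfl
      _ ≤ dist o ((h ^ m) • o) + dist ((h ^ m) • o) ((h ^ (m + n)) • o) := dist_triangle _ _ _
      _ = u m + u n := by rw [h1]
  have u_iter : ∀ (n : ℤ) (j : ℕ), u ((j : ℤ) * n) ≤ (j : ℝ) * u n := by
    intro n j
    induction j with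
    | zero => simp [u_zero]
    | succ i ih =>
      have e : ((i + 1 : ℕ) : ℤ) * n = (i : ℤ) * n + n := by push_cast; ring
      rw [e]
      calc u ((i : ℤ) * n + n) ≤ u ((i : ℤ) * n) + u n := u_subadd _ _
        _ ≤ (i : ℝ) * u n + u n := by linarith
        _ = ((i + 1 : ℕ) : ℝ) * u n := by push_cast; ring
  -- the stable translation length
  set τ : ℝ := ⨅ n : ℕ, u ((n : ℤ) + 1) / ((n : ℝ) + 1) with hτ
  have hbdd : BddBelow (Set.range fun n : ℕ => u ((n : ℤ) + 1) / ((n : ℝ) + 1)) := by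
    refine ⟨0, ?_⟩
    rintro x ⟨n, rfl⟩
    exact div_nonneg (u_nonneg _) (by positivity)
  have hτ_le : ∀ n : ℕ, τ ≤ u ((n : ℤ) + 1) / ((n : ℝ) + 1) := by
    intro n; rw [hτ]; exact ciInf_le hbdd n
  have u_geN : ∀ n : ℕ, (n : ℝ) * τ ≤ u (n : ℤ) := by
    intro n
    cases n with
    | zero => simpa using u_zero.ge
    | succ m =>
      have h1 := hτ_le m
      have hp : (0 : ℝ) < (m : ℝ) + 1 := by positivity
      rw [le_div_iff₀ hp] at h1
      have e : ((m + 1 : ℕ) : ℤ) = (m : ℤ) + 1 := by push_cast; ring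
      rw [e]
      push_cast
      linarith
  have u_ge_abs : ∀ n : ℤ, |(n : ℝ)| * τ ≤ u n := by
    intro n
    have habs : |(n : ℝ)| = (n.natAbs : ℝ) := by rw [Nat.cast_natAbs, Int.cast_abs]
    rcases Int.natAbs_eq n with e | e
    · rw [habs]; conv_rhs => rw [e]
      exact u_geN n.natAbs
    · rw [habs]; conv_rhs => rw [e]
      rw [u_neg]
      exact u_geN n.natAbs
  -- positivity of τ
  set t₀ : ℝ := lam⁻¹ * ℓ with ht₀def
  have ht₀ : 0 < t₀ := mul_pos (inv_pos.mpr (by linarith)) hℓpos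
  have u_lb : ∀ n : ℤ, t₀ * |(n : ℝ)| - c ≤ u n := hqg
  have u_posN : ∀ n : ℕ, 0 < n → 0 < u (n : ℤ) := by
    intro n hn
    by_contra hle
    push_neg at hle
    have hu0 : u (n : ℤ) = 0 := le_antisymm hle (u_nonneg _)
    set J : ℕ := ⌈(c + 1) / t₀⌉₊ + 1 with hJdef
    have hJ : (c + 1) / t₀ ≤ (J : ℝ) := le_trans (Nat.le_ceil _) (by push_cast [hJdef]; linarith)
    have h1 : u ((J : ℤ) * (n : ℤ)) ≤ (J : ℝ) * u (n : ℤ) := u_iter (n : ℤ) J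
    have h2 := u_lb ((J : ℤ) * (n : ℤ))
    have hn1 : (1 : ℝ) ≤ (n : ℝ) := by exact_mod_cast hn
    have hJ1 : (0 : ℝ) ≤ (J : ℝ) := by positivity
    have habs : |(((J : ℤ) * (n : ℤ) : ℤ) : ℝ)| = (J : ℝ) * (n : ℝ) := by
      push_cast
      rw [abs_of_nonneg (by positivity)]
    rw [habs] at h2
    have hc1 : c + 1 ≤ t₀ * (J : ℝ) := by
      rw [div_le_iff₀ ht₀] at hJ
      linarith
    have hc2 : t₀ * (J : ℝ) ≤ t₀ * ((J : ℝ) * (n : ℝ)) := by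
      apply mul_le_mul_of_nonneg_left _ ht₀.le
      nlinarith
    rw [hu0] at h1
    simp only [mul_zero] at h1
    linarith
  set N : ℕ := ⌈2 * c / t₀⌉₊ + 1 with hNdef
  have hN1 : 1 ≤ N := Nat.le_add_left 1 _
  have hNc : 2 * c / t₀ ≤ (N : ℝ) := le_trans (Nat.le_ceil _) (by push_cast [hNdef]; linarith)
  have hFne : (Finset.Icc 1 N).Nonempty := ⟨1, by simp [hN1]⟩
  set m₁ : ℝ := (Finset.Icc 1 N).inf' hFne (fun n : ℕ => u (n : ℤ) / (n : ℝ)) with hm₁def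
  have hm₁pos : 0 < m₁ := by
    rw [hm₁def, Finset.lt_inf'_iff]
    intro i hi
    rw [Finset.mem_Icc] at hi
    have hi1 : 0 < i := by omega
    exact div_pos (u_posN i hi1) (by exact_mod_cast hi1)
  have hτpos : 0 < τ := by
    have hge : min (t₀ / 2) m₁ ≤ τ := by
      rw [hτ]
      apply le_ciInf
      intro n
      rcases le_or_gt (n + 1) N with hnN | hnN
      · refine le_trans (min_le_right _ _) ?_
        have hmem : n + 1 ∈ Finset.Icc 1 N := by simp [Finset.mem_Icc]; omega
        have := Finset.inf'_le (fun m : ℕ => u (m : ℤ) / (m : ℝ)) hmem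
        rw [hm₁def]
        calc (Finset.Icc 1 N).inf' hFne (fun m : ℕ => u (m : ℤ) / (m : ℝ))
            ≤ u ((n + 1 : ℕ) : ℤ) / ((n + 1 : ℕ) : ℝ) := this
          _ = u ((n : ℤ) + 1) / ((n : ℝ) + 1) := by norm_cast
      · refine le_trans (min_le_left _ _) ?_
        rw [le_div_iff₀ (by positivity : (0:ℝ) < (n : ℝ) + 1)]
        have h2 := u_lb ((n : ℤ) + 1)
        have habs : |(((n : ℤ) + 1 : ℤ) : ℝ)| = (n : ℝ) + 1 := by
          push_cast
          exact abs_of_nonneg (by positivity)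
        rw [habs] at h2
        have hNn : (N : ℝ) ≤ (n : ℝ) + 1 := by exact_mod_cast hnN.le
        have hc2 : 2 * c ≤ t₀ * ((n : ℝ) + 1) := by
          rw [div_le_iff₀ ht₀] at hNc
          calc 2 * c ≤ (N : ℝ) * t₀ := hNc
            _ ≤ ((n : ℝ) + 1) * t₀ := by nlinarith
            _ = t₀ * ((n : ℝ) + 1) := by ring
        nlinarith
    calc (0 : ℝ) < min (t₀ / 2) m₁ := lt_min (by linarith) hm₁pos
      _ ≤ τ := hge
  -- choice of the power k
  obtain ⟨n₀, hn₀⟩ : ∃ n : ℕ, u ((n : ℤ) + 1) / ((n : ℝ) + 1) < 5 / 4 * τ := by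
    apply exists_lt_of_ciInf_lt
    rw [← hτ]
    linarith
  set k₀ : ℕ := n₀ + 1 with hk₀def
  have hk₀pos : 0 < k₀ := Nat.succ_pos _
  have hk₀ : u (k₀ : ℤ) < 5 / 4 * (k₀ : ℝ) * τ := by
    have hp : (0 : ℝ) < (n₀ : ℝ) + 1 := by positivity
    rw [div_lt_iff₀ hp] at hn₀
    have e : ((k₀ : ℕ) : ℤ) = (n₀ : ℤ) + 1 := by rw [hk₀def]; push_cast; ring
    rw [e]
    calc u ((n₀ : ℤ) + 1) < 5 / 4 * τ * ((n₀ : ℝ) + 1) := hn₀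
      _ = 5 / 4 * (k₀ : ℝ) * τ := by rw [hk₀def]; push_cast; ring
  set M : ℕ := ⌈2 / ((k₀ : ℝ) * τ)⌉₊ + 1 with hMdef
  have hMpos : 0 < M := Nat.succ_pos _
  have hM : 2 / ((k₀ : ℝ) * τ) ≤ (M : ℝ) := le_trans (Nat.le_ceil _) (by push_cast [hMdef]; linarith)
  set k : ℕ := M * k₀ with hkdef
  have hkpos : 0 < k := Nat.mul_pos hMpos hk₀pos
  set σ : ℝ := (k : ℝ) * τ with hσdef
  have hkR : (0:ℝ) < (k : ℝ) := by exact_mod_cast hkpos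
  have hσpos : 0 < σ := mul_pos hkR hτpos
  have hσ2 : 2 ≤ σ := by
    have hk₀τ : 0 < (k₀ : ℝ) * τ := by
      have : (0:ℝ) < (k₀:ℝ) := by exact_mod_cast hk₀pos
      exact mul_pos this hτpos
    rw [div_le_iff₀ hk₀τ] at hM
    calc (2 : ℝ) ≤ (M : ℝ) * ((k₀ : ℝ) * τ) := hM
      _ = σ := by rw [hσdef, hkdef]; push_cast; ring
  have hukσ : σ ≤ u (k : ℤ) := by
    have := u_geN k
    rw [hσdef]
    exact this
  set Δ : ℝ := u (k : ℤ) - σ with hΔdef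
  have hΔ0 : 0 ≤ Δ := by rw [hΔdef]; linarith
  have hΔ4 : Δ ≤ σ / 4 := by
    have h2 : ((k : ℕ) : ℤ) = (M : ℤ) * (k₀ : ℤ) := by rw [hkdef]; push_cast; ring
    have h3 : u (k : ℤ) ≤ (M : ℝ) * u (k₀ : ℤ) := by
      rw [h2]
      exact u_iter (k₀ : ℤ) M
    have hM0 : (0:ℝ) ≤ (M:ℝ) := by positivity
    have h4 : (M : ℝ) * u (k₀ : ℤ) ≤ (M : ℝ) * (5 / 4 * (k₀ : ℝ) * τ) :=
      mul_le_mul_of_nonneg_left hk₀.le hM0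
    have h5 : (M : ℝ) * (5 / 4 * (k₀ : ℝ) * τ) = 5 / 4 * σ := by
      rw [hσdef, hkdef]; push_cast; ring
    rw [hΔdef]
    linarith
  -- axis point distance estimates
  have hdk : ∀ i j : ℤ, dist ((h ^ (i * (k : ℤ))) • o) ((h ^ (j * (k : ℤ))) • o)
      = u ((j - i) * (k : ℤ)) := by
    intro i j
    have e0 : i * (k : ℤ) + (j - i) * (k : ℤ) = j * (k : ℤ) := by ring
    have e2 : (h ^ (i * (k : ℤ))) • ((h ^ ((j - i) * (k : ℤ))) • o) = (h ^ (j * (k : ℤ))) • o := by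
      rw [← mul_smul, ← zpow_add, e0]
    calc dist ((h ^ (i * (k : ℤ))) • o) ((h ^ (j * (k : ℤ))) • o)
        = dist ((h ^ (i * (k : ℤ))) • o) ((h ^ (i * (k : ℤ))) • ((h ^ ((j - i) * (k : ℤ))) • o)) := by
          rw [e2]
      _ = dist o ((h ^ ((j - i) * (k : ℤ))) • o) := hdist _ _ _
  have u_mulk_ub : ∀ n : ℤ, u (n * (k : ℤ)) ≤ |(n : ℝ)| * u (k : ℤ) := by
    intro n
    have habs : |(n : ℝ)| = (n.natAbs : ℝ) := by rw [Nat.cast_natAbs, Int.cast_abs]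
    rcases Int.natAbs_eq n with e | e
    · rw [habs]; conv_lhs => rw [e]
      exact u_iter (k : ℤ) n.natAbs
    · rw [habs]; conv_lhs => rw [e]
      rw [neg_mul, u_neg]
      exact u_iter (k : ℤ) n.natAbs
  have hlowZ : ∀ i j : ℤ,
      |(i : ℝ) - (j : ℝ)| * σ ≤ dist ((h ^ (i * (k : ℤ))) • o) ((h ^ (j * (k : ℤ))) • o) := by
    intro i j
    rw [hdk i j]
    have hge := u_ge_abs ((j - i) * (k : ℤ))
    have habs : |(((j - i) * (k : ℤ) : ℤ) : ℝ)| = |(i : ℝ) - (j : ℝ)| * (k : ℝ) := by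
      push_cast
      rw [abs_mul, abs_of_nonneg (le_of_lt hkR), abs_sub_comm]
    rw [habs] at hge
    calc |(i : ℝ) - (j : ℝ)| * σ = |(i : ℝ) - (j : ℝ)| * (k : ℝ) * τ := by rw [hσdef]; ring
      _ ≤ u ((j - i) * (k : ℤ)) := hge
  have hupZ : ∀ i j : ℤ,
      dist ((h ^ (i * (k : ℤ))) • o) ((h ^ (j * (k : ℤ))) • o) ≤ |(i : ℝ) - (j : ℝ)| * (σ + Δ) := by
    intro i j
    rw [hdk i j]
    have hub := u_mulk_ub (j - i)
    have habs : |((j - i : ℤ) : ℝ)| = |(i : ℝ) - (j : ℝ)| := by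
      push_cast
      rw [abs_sub_comm]
    have hσΔ : σ + Δ = u (k : ℤ) := by rw [hΔdef]; ring
    rw [hσΔ, ← habs]
    exact hub
  -- injectivity of powers of h
  have hzinj : ∀ n m : ℤ, h ^ n = h ^ m → n = m := by
    intro n m e
    by_contra hne
    have h1 : h ^ (n - m) = 1 := by rw [zpow_sub, e, mul_inv_cancel]
    have h2 : u (n - m) = 0 := by
      have : u (n - m) = dist o ((h ^ (n - m)) • o) := rfl
      rw [this, h1, one_smul, dist_self]
    have h3 := u_ge_abs (n - m)
    have h4 : (0 : ℝ) < |((n - m : ℤ) : ℝ)| := by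
      rw [abs_pos]
      intro hcon
      apply hne
      have : ((n - m : ℤ) : ℝ) = 0 := hcon
      have : (n - m : ℤ) = 0 := by exact_mod_cast this
      omega
    nlinarith
  -- analytic helpers
  have ha0 : (0 : ℝ) < a := by linarith
  have mono : ∀ t t' : ℝ, t ≤ t' → a ^ (-(s * t')) ≤ a ^ (-(s * t)) := by
    intro t t' htt
    apply Real.rpow_le_rpow_of_exponent_le ha.le
    have := mul_le_mul_of_nonneg_left htt hs.le
    linarith
  set x₀ : ℝ := a ^ (-(s * (σ / 4))) with hx₀
  have hx₀pos : 0 < x₀ := Real.rpow_pos_of_pos ha0 _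
  have hx₀lt : x₀ < 1 := by
    rw [hx₀]
    apply Real.rpow_lt_one_of_one_lt_of_neg ha
    nlinarith
  have hpow : ∀ n : ℕ, a ^ (-(s * ((n : ℝ) * (σ / 4)))) = x₀ ^ n := by
    intro n
    rw [hx₀, ← Real.rpow_natCast (a ^ (-(s * (σ / 4)))) n, ← Real.rpow_mul ha0.le]
    congr 1
    ring
  set K₂ : ℝ := 6 * σ + 8 * δ + 7 with hK₂def
  set y₁ : ℝ≥0∞ := ENNReal.ofReal x₀ with hy₁
  have hy₁lt : y₁ < 1 := by rw [hy₁]; exact ENNReal.ofReal_lt_one.mpr hx₀lt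
  set C : ℝ≥0∞ := (k : ℝ≥0∞) * (ENNReal.ofReal (a ^ (s * K₂)) * (2 * (1 - y₁)⁻¹)) with hCdef
  set f : G → ℝ≥0∞ := fun g => ENNReal.ofReal (a ^ (-(s * dist o (g • o)))) with hf
  -- the geometric series bound
  have hseries : ∀ jr : ℤ, (∑' j : ℤ, y₁ ^ (j - jr).natAbs) ≤ 2 * (1 - y₁)⁻¹ := by
    intro jr
    have hsh : (∑' j : ℤ, y₁ ^ (j - jr).natAbs) = ∑' j : ℤ, y₁ ^ j.natAbs :=
      (Equiv.subRight jr).tsum_eq (fun j : ℤ => y₁ ^ j.natAbs)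
    rw [hsh, tsum_of_nat_of_neg_add_one ENNReal.summable ENNReal.summable]
    have e1 : (∑' n : ℕ, y₁ ^ ((n : ℤ)).natAbs) = (1 - y₁)⁻¹ := by
      have : ∀ n : ℕ, y₁ ^ ((n : ℤ)).natAbs = y₁ ^ n := fun n => by rw [Int.natAbs_cast]
      rw [tsum_congr this, ENNReal.tsum_geometric]
    have e2 : (∑' n : ℕ, y₁ ^ (-((n : ℤ) + 1)).natAbs) ≤ (1 - y₁)⁻¹ := by
      have hna : ∀ n : ℕ, (-((n : ℤ) + 1)).natAbs = n + 1 := fun n => by omega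
      have h1 : (∑' n : ℕ, y₁ ^ (-((n : ℤ) + 1)).natAbs) = ∑' n : ℕ, y₁ ^ (n + 1) :=
        tsum_congr fun n => by rw [hna n]
      rw [h1]
      have h2 : (∑' n : ℕ, y₁ ^ (n + 1)) ≤ ∑' n : ℕ, y₁ ^ n := by
        apply ENNReal.tsum_le_tsum
        intro n
        rw [pow_succ]
        exact mul_le_of_le_one_right' hy₁lt.le
      rw [ENNReal.tsum_geometric] at h2
      exact h2
    rw [e1]
    calc (1 - y₁)⁻¹ + ∑' n : ℕ, y₁ ^ (-((n : ℤ) + 1)).natAbs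
        ≤ (1 - y₁)⁻¹ + (1 - y₁)⁻¹ := add_le_add_right e2 _
      _ = 2 * (1 - y₁)⁻¹ := (two_mul _).symm
  -- the per-coset bound
  have coset_bound : ∀ q : Quotient (QuotientGroup.rightRel (Subgroup.zpowers h)),
      (∑' g : {g : G // Quotient.mk (QuotientGroup.rightRel (Subgroup.zpowers h)) g = q}, f g.1)
        ≤ C * ENNReal.ofReal (a ^ (-(s * D q))) := by
    intro q
    obtain ⟨g₀, hg₀q⟩ : ∃ g₀ : G,
        Quotient.mk (QuotientGroup.rightRel (Subgroup.zpowers h)) g₀ = q :=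
      ⟨q.out, Quotient.out_eq q⟩
    have hDq : D q = ⨅ n : ℤ, dist o ((h ^ n * g₀) • o) := by rw [← hg₀q]; exact hD g₀
    have hmem : ∀ n : ℤ,
        Quotient.mk (QuotientGroup.rightRel (Subgroup.zpowers h)) (h ^ n * g₀) = q := by
      intro n
      rw [← hg₀q]
      apply Quotient.sound
      exact QuotientGroup.rightRel_apply.mpr
        (Subgroup.mem_zpowers_iff.mpr ⟨-n, by group⟩)
    have hinj' : Function.Injective
        (fun n : ℤ => (⟨h ^ n * g₀, hmem n⟩ :
          {g : G // Quotient.mk (QuotientGroup.rightRel (Subgroup.zpowers h)) g = q})) := by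
      intro n m e
      have e1 : h ^ n * g₀ = h ^ m * g₀ := congrArg Subtype.val e
      exact hzinj n m (mul_right_cancel e1)
    have hsurj' : Function.Surjective
        (fun n : ℤ => (⟨h ^ n * g₀, hmem n⟩ :
          {g : G // Quotient.mk (QuotientGroup.rightRel (Subgroup.zpowers h)) g = q})) := by
      rintro ⟨g, hg⟩
      have heq : Quotient.mk (QuotientGroup.rightRel (Subgroup.zpowers h)) g
          = Quotient.mk (QuotientGroup.rightRel (Subgroup.zpowers h)) g₀ := by rw [hg, hg₀q]
      have hrel : g₀ * g⁻¹ ∈ Subgroup.zpowers h :=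
        QuotientGroup.rightRel_apply.mp (Quotient.eq.mp heq)
      obtain ⟨n, hn⟩ := Subgroup.mem_zpowers_iff.mp hrel
      refine ⟨-n, Subtype.ext ?_⟩
      show h ^ (-n) * g₀ = g
      rw [zpow_neg, hn]
      group
    have hEsum : (∑' g : {g : G //
          Quotient.mk (QuotientGroup.rightRel (Subgroup.zpowers h)) g = q}, f g.1)
        = ∑' n : ℤ, f (h ^ n * g₀) :=
      ((Equiv.ofBijective _ ⟨hinj', hsurj'⟩).tsum_eq (fun g : {g : G //
          Quotient.mk (QuotientGroup.rightRel (Subgroup.zpowers h)) g = q} => f g.1)).symm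
    -- per-residue bound
    have inner : ∀ r : Fin k,
        (∑' j : ℤ, f (h ^ (j * (k : ℤ) + ((r : ℕ) : ℤ)) * g₀))
          ≤ ENNReal.ofReal (a ^ (s * K₂)) * (2 * (1 - y₁)⁻¹)
              * ENNReal.ofReal (a ^ (-(s * D q))) := by
      intro r
      set Fr : ℤ → ℝ := fun j => dist o ((h ^ (j * (k : ℤ) + ((r : ℕ) : ℤ)) * g₀) • o) with hFrdef
      have hFr0 : ∀ j, 0 ≤ Fr j := fun j => dist_nonneg
      have hbddFr : BddBelow (Set.range Fr) := ⟨0, by rintro x ⟨j, rfl⟩; exact hFr0 j⟩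
      have hDqFr : ∀ j : ℤ, D q ≤ Fr j := by
        intro j
        rw [hDq]
        exact ciInf_le ⟨0, by rintro x ⟨n, rfl⟩; exact dist_nonneg⟩ (j * (k : ℤ) + ((r : ℕ) : ℤ))
      set Dr : ℝ := ⨅ j : ℤ, Fr j with hDrdef
      have hDrle : ∀ j, Dr ≤ Fr j := fun j => ciInf_le hbddFr j
      have hDqDr : D q ≤ Dr := le_ciInf hDqFr
      obtain ⟨jr, hjr⟩ : ∃ j : ℤ, Fr j < Dr + 1 :=
        exists_lt_of_ciInf_lt (by rw [← hDrdef]; linarith)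
      set y' : X := (h ^ (jr * (k : ℤ) + ((r : ℕ) : ℤ)) * g₀) • o with hy'def
      set Q : ℤ → X := fun i => (h ^ (i * (k : ℤ))) • o with hQdef
      have hQd : ∀ i : ℤ, dist (Q i) y' = Fr (jr - i) := by
        intro i
        have e1 : (h ^ (i * (k : ℤ)))⁻¹ • ((h ^ (i * (k : ℤ))) • o) = o := inv_smul_smul _ _
        have e2 : (h ^ (i * (k : ℤ)))⁻¹ * (h ^ (jr * (k : ℤ) + ((r : ℕ) : ℤ)) * g₀)
            = h ^ ((jr - i) * (k : ℤ) + ((r : ℕ) : ℤ)) * g₀ := by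
          rw [← zpow_neg, ← mul_assoc, ← zpow_add]
          congr 2
          ring
        calc dist (Q i) y'
            = dist ((h ^ (i * (k : ℤ)))⁻¹ • Q i) ((h ^ (i * (k : ℤ)))⁻¹ • y') :=
              (hdist _ _ _).symm
          _ = dist o ((h ^ ((jr - i) * (k : ℤ) + ((r : ℕ) : ℤ)) * g₀) • o) := by
              rw [hQdef, hy'def]
              simp only
              rw [e1, ← mul_smul, e2]
          _ = Fr (jr - i) := rfl
      have hQ0y : dist (Q 0) y' = Fr jr := by
        have := hQd 0
        rw [sub_zero] at this
        exact this
      have hminQ : ∀ i : ℤ, dist (Q 0) y' - 1 ≤ dist (Q i) y' := by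
        intro i
        rw [hQ0y, hQd i]
        have := hDrle (jr - i)
        linarith
      have hlowQ : ∀ i j : ℤ, |(i : ℝ) - (j : ℝ)| * σ ≤ dist (Q i) (Q j) := by
        intro i j
        rw [hQdef]
        exact hlowZ i j
      have hupQ : ∀ i j : ℤ, dist (Q i) (Q j) ≤ |(i : ℝ) - (j : ℝ)| * (σ + Δ) := by
        intro i j
        rw [hQdef]
        exact hupZ i j
      have hcore := core_int δ σ Δ hδ hσ2 hΔ0 hΔ4 hhyp Q y' hlowQ hupQ hminQ
      have hFrlb : ∀ j : ℤ, D q + (((j - jr).natAbs : ℝ) * (σ / 4) - K₂) ≤ Fr j := by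
        intro j
        have hc := hcore (jr - j)
        have hjj : jr - (jr - j) = j := by ring
        rw [hQ0y, hQd (jr - j), hjj] at hc
        have habs2 : |((jr - j : ℤ) : ℝ)| = ((j - jr).natAbs : ℝ) := by
          rw [Nat.cast_natAbs, Int.cast_abs]
          push_cast
          rw [abs_sub_comm]
        rw [habs2] at hc
        have h1 := hDqDr
        have h2 := hDrle jr
        rw [hK₂def]
        linarith
      -- pointwise bound and summation
      have hpt : ∀ j : ℤ, f (h ^ (j * (k : ℤ) + ((r : ℕ) : ℤ)) * g₀)
          ≤ (ENNReal.ofReal (a ^ (s * K₂)) * ENNReal.ofReal (a ^ (-(s * D q))))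
              * y₁ ^ (j - jr).natAbs := by
        intro j
        have hfr : f (h ^ (j * (k : ℤ) + ((r : ℕ) : ℤ)) * g₀)
            = ENNReal.ofReal (a ^ (-(s * Fr j))) := rfl
        rw [hfr]
        have h1 : a ^ (-(s * Fr j))
            ≤ a ^ (-(s * (D q + (((j - jr).natAbs : ℝ) * (σ / 4) - K₂)))) :=
          mono _ _ (hFrlb j)
        have h2 : a ^ (-(s * (D q + (((j - jr).natAbs : ℝ) * (σ / 4) - K₂))))
            = a ^ (-(s * D q)) * (x₀ ^ (j - jr).natAbs * a ^ (s * K₂)) := by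
          rw [← hpow (j - jr).natAbs, ← Real.rpow_add ha0, ← Real.rpow_add ha0]
          congr 1
          ring
        calc ENNReal.ofReal (a ^ (-(s * Fr j)))
            ≤ ENNReal.ofReal (a ^ (-(s * D q)) * (x₀ ^ (j - jr).natAbs * a ^ (s * K₂))) := by
              rw [← h2]
              exact ENNReal.ofReal_le_ofReal h1
          _ = (ENNReal.ofReal (a ^ (s * K₂)) * ENNReal.ofReal (a ^ (-(s * D q))))
              * y₁ ^ (j - jr).natAbs := by
              rw [ENNReal.ofReal_mul (Real.rpow_nonneg ha0.le _),
                ENNReal.ofReal_mul (pow_nonneg hx₀pos.le _),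
                ENNReal.ofReal_pow hx₀pos.le, hy₁]
              ring
      calc (∑' j : ℤ, f (h ^ (j * (k : ℤ) + ((r : ℕ) : ℤ)) * g₀))
          ≤ ∑' j : ℤ, (ENNReal.ofReal (a ^ (s * K₂)) * ENNReal.ofReal (a ^ (-(s * D q))))
              * y₁ ^ (j - jr).natAbs := ENNReal.tsum_le_tsum hpt
        _ = (ENNReal.ofReal (a ^ (s * K₂)) * ENNReal.ofReal (a ^ (-(s * D q))))
              * ∑' j : ℤ, y₁ ^ (j - jr).natAbs := ENNReal.tsum_mul_left
        _ ≤ (ENNReal.ofReal (a ^ (s * K₂)) * ENNReal.ofReal (a ^ (-(s * D q))))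
              * (2 * (1 - y₁)⁻¹) := mul_le_mul_right (hseries jr) _
        _ = ENNReal.ofReal (a ^ (s * K₂)) * (2 * (1 - y₁)⁻¹)
              * ENNReal.ofReal (a ^ (-(s * D q))) := by ring
    calc (∑' g : {g : G //
          Quotient.mk (QuotientGroup.rightRel (Subgroup.zpowers h)) g = q}, f g.1)
        = ∑' n : ℤ, f (h ^ n * g₀) := hEsum
      _ = ∑' p : Fin k × ℤ, f (h ^ (p.2 * (k : ℤ) + ((p.1 : ℕ) : ℤ)) * g₀) :=
          ((finIntEquiv k hkpos).tsum_eq (fun n : ℤ => f (h ^ n * g₀))).symm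
      _ = ∑' r : Fin k, ∑' j : ℤ, f (h ^ (j * (k : ℤ) + ((r : ℕ) : ℤ)) * g₀) :=
          ENNReal.tsum_prod'
      _ ≤ ∑' r : Fin k, (ENNReal.ofReal (a ^ (s * K₂)) * (2 * (1 - y₁)⁻¹)
              * ENNReal.ofReal (a ^ (-(s * D q)))) := ENNReal.tsum_le_tsum inner
      _ = (k : ℝ≥0∞) * (ENNReal.ofReal (a ^ (s * K₂)) * (2 * (1 - y₁)⁻¹)
              * ENNReal.ofReal (a ^ (-(s * D q)))) := by
          rw [tsum_fintype]
          simp [Finset.sum_const, Finset.card_univ, nsmul_eq_mul]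
      _ = C * ENNReal.ofReal (a ^ (-(s * D q))) := by rw [hCdef]; ring
  -- assemble
  have hCne : C ≠ ⊤ := by
    rw [hCdef]
    apply ENNReal.mul_ne_top (by simp)
    apply ENNReal.mul_ne_top (by simp)
    apply ENNReal.mul_ne_top (by simp)
    rw [ENNReal.inv_ne_top]
    have : 0 < 1 - y₁ := tsub_pos_of_lt hy₁lt
    exact this.ne'
  have hsigma : (∑' g : G, f g)
      = ∑' q : Quotient (QuotientGroup.rightRel (Subgroup.zpowers h)),
          ∑' g : {g : G //
            Quotient.mk (QuotientGroup.rightRel (Subgroup.zpowers h)) g = q}, f g.1 :=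
    ((Equiv.sigmaFiberEquiv
      (fun g : G => Quotient.mk (QuotientGroup.rightRel (Subgroup.zpowers h)) g)).tsum_eq
        f).symm.trans (ENNReal.tsum_sigma' _)
  refine ⟨C.toReal + 1, by positivity, ?_⟩
  have hCle : C ≤ ENNReal.ofReal (C.toReal + 1) := by
    conv_lhs => rw [← ENNReal.ofReal_toReal hCne]
    exact ENNReal.ofReal_le_ofReal (by linarith [ENNReal.toReal_nonneg (a := C)])
  calc (∑' g : G, f g)
      = ∑' q : Quotient (QuotientGroup.rightRel (Subgroup.zpowers h)),
          ∑' g : {g : G //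
            Quotient.mk (QuotientGroup.rightRel (Subgroup.zpowers h)) g = q}, f g.1 := hsigma
    _ ≤ ∑' q : Quotient (QuotientGroup.rightRel (Subgroup.zpowers h)),
          C * ENNReal.ofReal (a ^ (-(s * D q))) := ENNReal.tsum_le_tsum coset_bound
    _ = C * ∑' q : Quotient (QuotientGroup.rightRel (Subgroup.zpowers h)),
          ENNReal.ofReal (a ^ (-(s * D q))) := ENNReal.tsum_mul_left
    _ ≤ ENNReal.ofReal (C.toReal + 1) *
          ∑' q : Quotient (QuotientGroup.rightRel (Subgroup.zpowers h)),
            ENNReal.ofReal (a ^ (-(s * D q))) := mul_le_mul_left hCle _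
end

section
/- Let $\Gamma$ be a non-elementary discrete isometry group of a proper geodesic Gromov hyperbolic space with finite critical exponent, and suppose $\Gamma$ contains a hyperbolic element $h$ whose cyclic group $\langle h\rangle$ is of divergence type with critical exponent $0$, and that the limit set of $\Gamma$ properly contains the two fixed points of $h$. Assuming Coornaert's results (existence of a Patterson measure for any group of finite critical exponent; the support of any quasi-invariant quasiconformal measure of critical dimension for a divergence-type group lies in its limit set), conclude that $e_a(\Gamma)>0$. -/
open MeasureTheory
open scoped ENNReal

/-- `μ` is an `s`-dimensional quasi-invariant quasiconformal measure for the
set `S` of isometries, with boundary action `ext` and conformal derivative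
cocycle `j`. -/
def QCMeasure {B : Type*} [MeasurableSpace B] {G : Type*} (S : Set G)
    (ext : G → B → B) (j : G → B → ℝ) (s : ℝ) (μ : Measure B) : Prop :=
  ∃ D : ℝ, 1 ≤ D ∧ ∀ g ∈ S, ∀ E : Set B, MeasurableSet E →
    ENNReal.ofReal D⁻¹ * ∫⁻ ξ in E, ENNReal.ofReal (j g ξ ^ s) ∂μ ≤ μ (ext g '' E) ∧
    μ (ext g '' E) ≤ ENNReal.ofReal D * ∫⁻ ξ in E, ENNReal.ofReal (j g ξ ^ s) ∂μ

/-- Proposition 8.6 of the paper: the critical exponent of a non-elementary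
discrete isometry group `Γ` is strictly positive. Here `Γ` has finite
critical exponent `e`, contains a hyperbolic element `h` whose cyclic group
`⟨h⟩` is of divergence type with critical exponent `0`, and whose limit set
`ΛΓ` properly contains the two fixed points of `h` on the boundary `B`.
Coornaert's results are assumed as hypotheses: `hexist` provides a Patterson
measure for `Γ` (a quasi-invariant quasiconformal measure of dimension `e`
with support equal to `ΛΓ`), and `hsupp` states that any nonzero
`⟨h⟩`-quasi-invariant quasiconformal measure of dimension `0` (the critical
exponent of the divergence-type group `⟨h⟩`) is concentrated on the limit set
`Fix(h)` of `⟨h⟩`. -/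
theorem critical_exponent_positive {X B : Type*} [MetricSpace X]
    [MeasurableSpace B] [TopologicalSpace B] [T2Space B]
    (o : X) (Γ : Subgroup (X ≃ᵢ X))
    (hdisc : ∀ R : ℝ, {γ : Γ | dist o ((γ : X ≃ᵢ X) o) ≤ R}.Finite)
    (ext : (X ≃ᵢ X) → B → B) (j : (X ≃ᵢ X) → B → ℝ)
    (a : ℝ) (ha : 1 < a)
    -- the critical exponent of `Γ`, assumed finite:
    (e : ℝ)
    (he : e = sInf {s : ℝ | 0 ≤ s ∧
      ∑' γ : Γ, ENNReal.ofReal (a ^ (-(s * dist o ((γ : X ≃ᵢ X) o)))) < ⊤})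
    (hfin : ∃ s : ℝ, 0 ≤ s ∧
      ∑' γ : Γ, ENNReal.ofReal (a ^ (-(s * dist o ((γ : X ≃ᵢ X) o)))) < ⊤)
    -- a hyperbolic element `h ∈ Γ` with exactly two boundary fixed points:
    (h : X ≃ᵢ X) (hh : h ∈ Γ)
    (ξ₁ ξ₂ : B) (hξ : ξ₁ ≠ ξ₂) (hFix : {ξ : B | ext h ξ = ξ} = {ξ₁, ξ₂})
    -- `⟨h⟩` has critical exponent `0` and is of divergence type:
    (hcyc : ∀ s : ℝ, 0 < s →
      ∑' n : ℤ, ENNReal.ofReal (a ^ (-(s * dist o ((h ^ n : X ≃ᵢ X) o)))) < ⊤)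
    (hcycdiv :
      ∑' n : ℤ, ENNReal.ofReal (a ^ (-((0:ℝ) * dist o ((h ^ n : X ≃ᵢ X) o)))) = ⊤)
    -- the limit set of `Γ`, non-elementary, properly containing `Fix(h)`:
    (ΛΓ : Set B)
    (hnonelem : ∃ p q r : B, p ∈ ΛΓ ∧ q ∈ ΛΓ ∧ r ∈ ΛΓ ∧ p ≠ q ∧ p ≠ r ∧ q ≠ r)
    (hsub : {ξ : B | ext h ξ = ξ} ⊆ ΛΓ) (hproper : {ξ : B | ext h ξ = ξ} ≠ ΛΓ)
    -- Coornaert: existence of a Patterson measure for `Γ` with support `ΛΓ`: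
    (hexist : ∃ μ : Measure B, μ ≠ 0 ∧ QCMeasure (Γ : Set (X ≃ᵢ X)) ext j e μ ∧
      μ ΛΓᶜ = 0 ∧ ∀ U : Set B, IsOpen U → (U ∩ ΛΓ).Nonempty → 0 < μ U)
    -- Coornaert: a nonzero quasiconformal measure of dimension `0` for the
    -- divergence-type group `⟨h⟩` is concentrated on `Fix(h)`:
    (hsupp : ∀ μ : Measure B, μ ≠ 0 →
      QCMeasure ((Subgroup.zpowers h : Subgroup (X ≃ᵢ X)) : Set (X ≃ᵢ X)) ext j 0 μ →
      μ {ξ : B | ext h ξ = ξ}ᶜ = 0) :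
    0 < e := by
  -- `e ≥ 0` since it is an infimum of nonnegative reals
  have he0 : 0 ≤ e := by
    rw [he]
    exact Real.sInf_nonneg (fun x hx => hx.1)
  rcases lt_or_eq_of_le he0 with hlt | heq
  · exact hlt
  -- suppose `e = 0`; derive a contradiction
  exfalso
  obtain ⟨μ, hμ0, hQC, hnull, hpos⟩ := hexist
  -- the Patterson measure is a `⟨h⟩`-QC measure of dimension 0
  have hQC0 : QCMeasure ((Subgroup.zpowers h : Subgroup (X ≃ᵢ X)) : Set (X ≃ᵢ X))
      ext j 0 μ := by
    rw [← heq] at hQC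
    obtain ⟨D, hD, hprop⟩ := hQC
    refine ⟨D, hD, fun g hg => hprop g ?_⟩
    exact (Subgroup.zpowers_le.mpr hh) hg
  have hFixnull : μ {ξ : B | ext h ξ = ξ}ᶜ = 0 := hsupp μ hμ0 hQC0
  -- pick a limit point outside `Fix(h)`
  obtain ⟨ζ, hζΛ, hζF⟩ := Set.exists_of_ssubset (ssubset_of_subset_of_ne hsub hproper)
  -- the complement of the two fixed points is open
  have hopen : IsOpen {ξ : B | ext h ξ = ξ}ᶜ := by
    rw [hFix]
    exact ((Set.finite_singleton ξ₂).insert ξ₁).isClosed.isOpen_compl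
  have hposU : 0 < μ {ξ : B | ext h ξ = ξ}ᶜ :=
    hpos _ hopen ⟨ζ, hζF, hζΛ⟩
  rw [hFixnull] at hposU
  exact lt_irrefl _ hposU
end
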